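/- Let Γ be a finite tree with a negative definite intersection matrix I (off-diagonal entries 1 for adjacent vertices, 0 otherwise), d = det(-I), and a_{uw} = -d·(I^{-1})_{uw}. For vertices u, w of Γ, let Γ∖(path from u to w) denote the graph obtained by deleting all vertices on the unique path from u to w (inclusive) together with incident edges. Then a_{uw} = det(Γ ∖ path(u,w)), where det of a graph means det of the negative of its intersection matrix, with det(∅) = 1. -/

import Mathlib

open BigOperators Matrix Equiv

section aux
variable {V : Type*} [Fintype V] [DecidableEq V]
variable {G : SimpleGraph V} [DecidableRel G.Adj]

lemma orbit_walk {w : V} {σ : Equiv.Perm V}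
    (hgood : ∀ v, v ≠ w → σ v = v ∨ G.Adj v (σ v)) :
    ∀ k v, (σ ^ k) v = w → (∀ j < k, (σ ^ j) v ≠ w) →
      ∃ Q : G.Walk v w, Q.IsPath ∧
        Q.support = (List.range (k+1)).map (fun j => (σ ^ j) v) := by
  intro k
  induction k with
  | zero =>
    intro v hk _
    simp only [pow_zero, Equiv.Perm.coe_one, id_eq] at hk
    subst hk
    exact ⟨SimpleGraph.Walk.nil, by simp, by simp [List.range_succ]⟩
  | succ k IH =>
    intro v hk hmin
    have hvw : v ≠ w := by simpa using hmin 0 (Nat.succ_pos k)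
    have hσv : σ v ≠ v := by
      intro h
      exact hvw ((Equiv.Perm.pow_apply_eq_self_of_apply_eq_self h (k+1)).symm.trans hk)
    have hadj : G.Adj v (σ v) := ((hgood v hvw).resolve_left hσv)
    have hk' : (σ ^ k) (σ v) = w := by
      rw [← Equiv.Perm.mul_apply, ← pow_succ]; exact hk
    have hmin' : ∀ j < k, (σ ^ j) (σ v) ≠ w := by
      intro j hj
      rw [← Equiv.Perm.mul_apply, ← pow_succ]
      exact hmin (j+1) (Nat.succ_lt_succ hj)
    obtain ⟨Q', hQ', hsup⟩ := IH (σ v) hk' hmin'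
    have hvnot : v ∉ Q'.support := by
      rw [hsup]
      simp only [List.mem_map, List.mem_range]
      rintro ⟨j, hj, hjv⟩
      obtain ⟨p, hppos, hple, hper⟩ : ∃ p, 0 < p ∧ p ≤ k + 1 ∧ (σ ^ p) v = v := by
        refine ⟨j + 1, Nat.succ_pos j, Nat.succ_le_succ (Nat.le_of_lt_succ hj), ?_⟩
        rw [pow_succ, Equiv.Perm.mul_apply]; exact hjv
      have hmod : (σ ^ ((k+1) % p)) v = w := by
        have h1 : ((σ ^ p) ^ ((k+1)/p)) v = v :=
          Equiv.Perm.pow_apply_eq_self_of_apply_eq_self hper _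
        calc (σ ^ ((k+1) % p)) v
            = (σ ^ ((k+1) % p)) (((σ ^ p) ^ ((k+1)/p)) v) := by rw [h1]
          _ = (σ ^ ((k+1) % p + p * ((k+1)/p))) v := by
              rw [pow_add, pow_mul, Equiv.Perm.mul_apply]
          _ = (σ ^ (k+1)) v := by rw [Nat.mod_add_div]
          _ = w := hk
      have hlt : (k+1) % p < k + 1 := by
        have h1 : (k+1) % p < p := Nat.mod_lt _ hppos
        omega
      exact hmin _ hlt hmod
    have hlist : (List.range (k+2)).map (fun j => (σ ^ j) v)
        = v :: (List.range (k+1)).map (fun j => (σ ^ j) (σ v)) := by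
      rw [List.range_succ_eq_map (n := k+1), List.map_cons, List.map_map]
      refine congrArg₂ _ (by simp) ?_
      apply List.map_congr_left
      intro j _
      simp only [Function.comp_apply]
      rw [pow_succ, Equiv.Perm.mul_apply]
    refine ⟨SimpleGraph.Walk.cons hadj Q', ?_, ?_⟩
    · exact (SimpleGraph.Walk.cons_isPath_iff _ _).2 ⟨hQ', hvnot⟩
    · rw [SimpleGraph.Walk.support_cons, hsup, hlist]

end aux

section aux2
variable {V : Type*} [Fintype V] [DecidableEq V]
variable {G : SimpleGraph V} [DecidableRel G.Adj]

lemma sigma_on_path (hG : G.IsTree) {u w : V} (P : G.Walk u w) (hP : P.IsPath)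
    {σ : Equiv.Perm V} (hw : σ w = u)
    (hgood : ∀ v, v ≠ w → σ v = v ∨ G.Adj v (σ v)) :
    ∀ v ∈ P.support, σ v = P.support.formPerm v := by
  classical
  have hex : ∃ k, (σ ^ k) u = w := by
    obtain ⟨m, hm⟩ : ∃ m, orderOf σ = m + 1 :=
      ⟨orderOf σ - 1, (Nat.succ_pred_eq_of_pos (orderOf_pos σ)).symm⟩
    refine ⟨m, ?_⟩
    have h1 : (σ ^ (m+1)) w = w := by rw [← hm, pow_orderOf_eq_one]; rfl
    rwa [pow_succ, Equiv.Perm.mul_apply, hw] at h1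
  set k := Nat.find hex with hkdef
  have hk : (σ ^ k) u = w := Nat.find_spec hex
  have hmin : ∀ j < k, (σ ^ j) u ≠ w := fun j hj => Nat.find_min hex hj
  obtain ⟨Q, hQ, hsup⟩ := orbit_walk hgood k u hk hmin
  have hPQ : P = Q := (hG.existsUnique_path u w).unique hP hQ
  have hsupP : P.support = (List.range (k+1)).map (fun j => (σ ^ j) u) := by
    rw [hPQ]; exact hsup
  have hnd := hP.support_nodup
  intro v hv
  obtain ⟨i, hi, hvi⟩ := List.getElem_of_mem hv
  have hlen : P.support.length = k + 1 := by rw [hsupP]; simp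
  have hgetel : ∀ j (hj : j < P.support.length), P.support[j] = (σ ^ j) u := by
    intro j hj
    rw [List.getElem_of_eq hsupP hj]
    simp
  rw [← hvi, List.formPerm_apply_getElem _ hnd i hi,
    hgetel i hi, hgetel ((i+1) % P.support.length) (Nat.mod_lt _ (by omega))]
  rcases Nat.lt_or_ge (i+1) P.support.length with h | h
  · rw [Nat.mod_eq_of_lt h, pow_succ', Equiv.Perm.mul_apply]
  · have hik : i + 1 = P.support.length := by omega
    rw [← hik, Nat.mod_self, pow_zero]
    have : i = k := by omega
    subst this
    rw [hk, hw]
    rfl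

end aux2

lemma sign_formPerm_nodup {α : Type*} [Fintype α] [DecidableEq α]
    (l : List α) (hl : l.Nodup) (hne : l ≠ []) :
    Equiv.Perm.sign l.formPerm = (-1)^(l.length + 1) := by
  rcases l with _ | ⟨x, l⟩
  · exact absurd rfl hne
  rcases l with _ | ⟨y, l⟩
  · simp [List.formPerm_singleton]
  · have hc : (x::y::l).formPerm.IsCycle :=
      List.isCycle_formPerm hl (by simp)
    rw [hc.sign, List.support_formPerm_of_nodup _ hl (by simp)]
    rw [List.card_toFinset, hl.dedup]
    rw [pow_succ, mul_neg_one]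

lemma detexp {n : Type*} [DecidableEq n] [Fintype n] (A : Matrix n n ℤ) :
    A.det = ∑ σ : Equiv.Perm n, (Equiv.Perm.sign σ : ℤ) * ∏ i, A i (σ i) := by
  rw [← Matrix.det_transpose, Matrix.det_apply']
  refine Finset.sum_congr rfl fun σ _ => ?_
  simp [Matrix.transpose_apply]

section core
variable {V : Type*} [Fintype V] [DecidableEq V]
variable {G : SimpleGraph V} [DecidableRel G.Adj]

lemma core_det (hG : G.IsTree) (M : Matrix V V ℤ)
    (hoff : ∀ a b : V, a ≠ b → M a b = if G.Adj a b then 1 else 0)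
    {u w : V} (P : G.Walk u w) (hP : P.IsPath) :
    (M.updateRow w (Pi.single u 1)).det
      = (-1)^P.length *
        (Matrix.of fun i j : {x : V // x ∉ P.support} => M i.1 j.1).det := by
  classical
  set L := P.support with hL
  have hnd : L.Nodup := hP.support_nodup
  set c : Equiv.Perm V := L.formPerm with hc
  set M' := M.updateRow w (Pi.single u 1) with hM'
  have hlenpos : 0 < L.length := by
    rw [hL, SimpleGraph.Walk.length_support]; omega
  have hlenL : L.length = P.length + 1 := by
    rw [hL, SimpleGraph.Walk.length_support]
  have hgetlast : L[L.length - 1]'(by omega) = w := by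
    rw [← List.getLast_eq_getElem]
    exact P.getLast_support
  have hget0 : L[0]'hlenpos = u := by
    rw [← List.head_eq_getElem_zero (P.support_ne_nil)]
    exact P.head_support
  have hwL : w ∈ L := P.end_mem_support
  have huL : u ∈ L := P.start_mem_support
  have hcw : c w = u := by
    rw [hc, ← hgetlast, List.formPerm_apply_getElem _ hnd _ (by omega)]
    have h1 : (L.length - 1 + 1) % L.length = 0 := by
      rw [Nat.sub_add_cancel hlenpos, Nat.mod_self]
    simp only [h1]
    exact hget0
  -- adjacency along the path
  have hadjL : ∀ v ∈ L, v ≠ w → G.Adj v (c v) := by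
    intro v hv hvw
    obtain ⟨i, hi, hvi⟩ := List.getElem_of_mem hv
    have hi1 : i + 1 < L.length := by
      rcases Nat.lt_or_ge (i+1) L.length with h | h
      · exact h
      · exfalso
        have h4 : v = w := by
          rw [← hvi, ← hgetlast]
          congr 1
          omega
        exact hvw h4
    have hcv : c v = L[i+1] := by
      rw [hc, ← hvi, List.formPerm_apply_getElem _ hnd _ hi]
      congr 1
      exact Nat.mod_eq_of_lt hi1
    rw [hcv, ← hvi]
    have hchain : List.IsChain G.Adj L := P.isChain_adj_support
    exact List.isChain_iff_getElem.mp hchain i (by omega)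
  -- image stability
  have himage : ∀ σ : Equiv.Perm V, (∀ v ∈ L, σ v = c v) → ∀ v, (σ v ∈ L ↔ v ∈ L) := by
    intro σ hσ v
    constructor
    · intro hσv
      by_contra hv
      have hsub : L.toFinset.image σ ⊆ L.toFinset := by
        intro x hx
        simp only [Finset.mem_image, List.mem_toFinset] at hx ⊢
        obtain ⟨y, hy, rfl⟩ := hx
        rw [hσ y hy]
        exact List.formPerm_apply_mem_of_mem hy
      have heq : L.toFinset.image σ = L.toFinset :=
        Finset.eq_of_subset_of_card_le hsub
          (le_of_eq (Finset.card_image_of_injective _ σ.injective).symm)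
      have : σ v ∈ L.toFinset.image σ := by
        rw [heq, List.mem_toFinset]; exact hσv
      obtain ⟨y, hy, hyv⟩ := Finset.mem_image.mp this
      rw [σ.injective hyv] at hy
      exact hv (List.mem_toFinset.mp hy)
    · intro hv
      rw [hσ v hv]
      exact List.formPerm_apply_mem_of_mem hv
  -- the embedding of permutations
  set Φ : Equiv.Perm {x : V // x ∉ L} → Equiv.Perm V :=
    fun τ => c * Equiv.Perm.ofSubtype τ with hΦ
  have hofinj : Function.Injective
      (Equiv.Perm.ofSubtype : Equiv.Perm {x : V // x ∉ L} → Equiv.Perm V) := by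
    intro τ τ' h
    ext x
    have h2 := congrArg (fun f : Equiv.Perm V => f x.1) h
    simpa only [Equiv.Perm.ofSubtype_apply_coe] using h2
  have hΦinj : Function.Injective Φ := fun τ τ' h =>
    hofinj (mul_left_cancel h)
  -- vanishing off the image
  have hvanish : ∀ σ : Equiv.Perm V, σ ∉ Finset.univ.image Φ →
      (Equiv.Perm.sign σ : ℤ) * ∏ v, M' v (σ v) = 0 := by
    intro σ hσ
    rcases eq_or_ne (∏ v, M' v (σ v)) 0 with h | h
    · rw [h, mul_zero]
    exfalso; apply hσ
    have hfac : ∀ v, M' v (σ v) ≠ 0 := fun v =>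
      Finset.prod_ne_zero_iff.mp h v (Finset.mem_univ v)
    have hw1 : σ w = u := by
      have h2 := hfac w
      rw [hM', Matrix.updateRow_self] at h2
      by_contra hne
      exact h2 (by simp [Pi.single_apply, hne])
    have hgood : ∀ v, v ≠ w → σ v = v ∨ G.Adj v (σ v) := by
      intro v hv
      have h2 := hfac v
      rw [hM', Matrix.updateRow_ne hv] at h2
      by_cases h1 : σ v = v
      · exact Or.inl h1
      · right
        by_contra hadj
        exact h2 (by rw [hoff v (σ v) (fun hh => h1 hh.symm), if_neg hadj])
    have hpath : ∀ v ∈ L, σ v = c v := sigma_on_path hG P hP hw1 hgood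
    have hiff := himage σ hpath
    set e := c⁻¹ * σ with he
    have hefix : ∀ v ∈ L, e v = v := by
      intro v hv
      rw [he, Equiv.Perm.mul_apply, hpath v hv]
      exact c.symm_apply_apply v
    have heout : ∀ v, v ∉ L → e v = σ v := by
      intro v hv
      have hσv : σ v ∉ L := fun hh => hv ((hiff v).mp hh)
      rw [he, Equiv.Perm.mul_apply]
      apply c.injective
      rw [show c (c⁻¹ (σ v)) = σ v from c.apply_symm_apply _]
      exact (List.formPerm_apply_of_notMem hσv).symm
    have hheq : ∀ x, (x ∉ L) ↔ (e x ∉ L) := by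
      intro x
      by_cases hx : x ∈ L
      · simp [hefix x hx]
      · have h1 : σ x ∉ L := fun hh => hx ((hiff x).mp hh)
        rw [heout x hx]; tauto
    have hfixmem : ∀ x, e x ≠ x → x ∉ L := by
      intro x hx
      by_contra hmem
      exact hx (hefix x (by simpa using hmem))
    refine Finset.mem_image.mpr ⟨e.subtypePerm (fun x => (hheq x).symm), Finset.mem_univ _, ?_⟩
    rw [hΦ]
    simp only
    rw [Equiv.Perm.ofSubtype_subtypePerm (fun x => (hheq x).symm) hfixmem, he, mul_inv_cancel_left]
  -- term computation
  have hterm : ∀ τ : Equiv.Perm {x : V // x ∉ L},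
      (Equiv.Perm.sign (Φ τ) : ℤ) * ∏ v, M' v (Φ τ v)
        = (-1)^P.length * ((Equiv.Perm.sign τ : ℤ) *
            ∏ i : {x : V // x ∉ L}, M i.1 (τ i).1) := by
    intro τ
    have happly_mem : ∀ v ∈ L, Φ τ v = c v := by
      intro v hv
      rw [hΦ]
      simp only [Equiv.Perm.mul_apply]
      rw [Equiv.Perm.ofSubtype_apply_of_not_mem τ (by simpa using hv)]
    have happly_not : ∀ v (hv : v ∉ L), Φ τ v = (τ ⟨v, hv⟩).1 := by
      intro v hv
      rw [hΦ]
      simp only [Equiv.Perm.mul_apply]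
      rw [Equiv.Perm.ofSubtype_apply_of_mem τ hv]
      exact List.formPerm_apply_of_notMem (τ ⟨v, hv⟩).2
    have hsignc : ((Equiv.Perm.sign c : ℤˣ) : ℤ) = (-1 : ℤ)^(P.length) := by
      rw [hc, sign_formPerm_nodup _ hnd P.support_ne_nil, hlenL]
      simp only [Units.val_pow_eq_pow_val, Units.val_neg, Units.val_one]
      ring
    have hsign : (Equiv.Perm.sign (Φ τ) : ℤ) = (-1)^P.length * (Equiv.Perm.sign τ : ℤ) := by
      simp only [hΦ]
      rw [_root_.map_mul, Units.val_mul, Equiv.Perm.sign_ofSubtype, hsignc]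
    have hprod : ∏ v, M' v (Φ τ v) = ∏ i : {x : V // x ∉ L}, M i.1 (τ i).1 := by
      rw [← Finset.prod_mul_prod_compl L.toFinset]
      have h1 : ∏ v ∈ L.toFinset, M' v (Φ τ v) = 1 := by
        apply Finset.prod_eq_one
        intro v hv
        have hvL : v ∈ L := List.mem_toFinset.mp hv
        rw [happly_mem v hvL]
        by_cases hvw : v = w
        · subst hvw
          rw [hcw, hM', Matrix.updateRow_self]
          simp
        · rw [hM', Matrix.updateRow_ne hvw]
          have hadj := hadjL v hvL hvw
          rw [hoff v (c v) hadj.ne, if_pos hadj]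
      rw [h1, one_mul]
      rw [Finset.prod_subtype (L.toFinsetᶜ) (p := fun x => x ∉ L) (by simp)]
      apply Finset.prod_congr rfl
      intro i _
      rw [happly_not i.1 i.2]
      rw [hM', Matrix.updateRow_ne (fun hh => i.2 (by rw [hh]; exact hwL))]
    rw [hsign, hprod]
    ring
  -- assembling
  rw [detexp M', detexp (Matrix.of fun i j : {x : V // x ∉ P.support} => M i.1 j.1)]
  rw [← Finset.sum_subset (Finset.subset_univ (Finset.univ.image Φ))
    (fun x _ hx => hvanish x hx)]
  rw [Finset.sum_image (fun τ _ τ' _ h => hΦinj h)]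
  rw [Finset.mul_sum]
  exact Finset.sum_congr rfl fun τ _ => hterm τ

end core

theorem stmt9 (V : Type*) [Fintype V] [DecidableEq V]
    (G : SimpleGraph V) [DecidableRel G.Adj] (hG : G.IsTree)
    (I : Matrix V V ℤ)
    (hoff : ∀ u w : V, u ≠ w → I u w = if G.Adj u w then 1 else 0)
    (hneg : Matrix.PosDef ((-I).map ((↑) : ℤ → ℝ)))
    (u w : V) (P : G.Walk u w) (hP : P.IsPath) :
    -(((-I).det : ℚ)) * ((I.map ((↑) : ℤ → ℚ))⁻¹ u w)
      = ((Matrix.det (Matrix.of fun i j : {x : V // x ∉ P.support} => -I i.1 j.1) : ℤ) : ℚ) := by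
  classical
  have hd0 : (-I).det ≠ 0 := by
    have h1 := hneg.det_pos
    rw [show (-I).map ((↑) : ℤ → ℝ) = (Int.castRingHom ℝ).mapMatrix (-I) from rfl,
      ← RingHom.map_det] at h1
    intro h
    rw [h] at h1
    simp at h1
  have hdI : I.det ≠ 0 := by
    intro h
    apply hd0
    rw [Matrix.det_neg, h, mul_zero]
  have hdIQ : (I.det : ℚ) ≠ 0 := by exact_mod_cast hdI
  have hm : Fintype.card {x : V // x ∉ P.support} + P.support.length = Fintype.card V := by
    have h3 : Fintype.card {x : V // x ∈ P.support} = P.support.length := by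
      calc Fintype.card {x : V // x ∈ P.support}
          = Fintype.card P.support.toFinset :=
            Fintype.card_congr (Equiv.subtypeEquivRight (by simp))
        _ = P.support.toFinset.card := Fintype.card_coe _
        _ = P.support.length := by
            rw [List.card_toFinset, hP.support_nodup.dedup]
    have h4 : Fintype.card {x : V // x ∉ P.support}
        = Fintype.card V - Fintype.card {x : V // x ∈ P.support} :=
      Fintype.card_subtype_compl _
    have h5 : Fintype.card {x : V // x ∈ P.support} ≤ Fintype.card V :=
      Fintype.card_le_of_injective Subtype.val Subtype.val_injective
    omega
  have hA : (I.map ((↑) : ℤ → ℚ))⁻¹ u w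
      = (I.det : ℚ)⁻¹ * (((I.updateRow w (Pi.single u 1)).det : ℤ) : ℚ) := by
    rw [Matrix.inv_def, Matrix.smul_apply, Ring.inverse_eq_inv, smul_eq_mul]
    congr 1
    · congr 1
      rw [show I.map ((↑) : ℤ → ℚ) = (Int.castRingHom ℚ).mapMatrix I from rfl, ← RingHom.map_det]
      simp
    · rw [show I.map ((↑) : ℤ → ℚ) = (Int.castRingHom ℚ).mapMatrix I from rfl,
        ← RingHom.map_adjugate, RingHom.mapMatrix_apply, Matrix.map_apply, Matrix.adjugate_apply]
      simp
  have hcore := core_det hG I hoff P hP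
  have hneg_sub : (Matrix.of fun i j : {x : V // x ∉ P.support} => -I i.1 j.1)
      = -(Matrix.of fun i j : {x : V // x ∉ P.support} => I i.1 j.1) := rfl
  rw [hA, hcore, hneg_sub, Matrix.det_neg, Matrix.det_neg]
  have hn : Fintype.card V = Fintype.card {x : V // x ∉ P.support} + P.length + 1 := by
    rw [SimpleGraph.Walk.length_support] at hm
    omega
  rw [hn]
  push_cast
  field_simp
  ring_nf
  rw [mul_comm P.length 2, pow_mul]
  norm_num
  rw [mul_right_comm, mul_inv_cancel₀ (by rw [← Int.cast_det]; exact hdIQ), one_mul]
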